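/- Let 𝕜 be ℝ or ℂ and let A be a unital associative 𝕜-algebra which is also an inner product space over 𝕜 whose unit e₀ satisfies ‖e₀‖ = 1. Suppose there exists f ∈ A with f ≠ 0 and f·f = 0. Then there exist a, b ∈ A such that ‖a·b‖ > ‖a‖·‖b‖, i.e. the norm is not submultiplicative. -/

import Mathlib

theorem not_submultiplicative_of_square_zero_element
    {𝕜 : Type*} [RCLike 𝕜] {A : Type*} [NormedAddCommGroup A] [InnerProductSpace 𝕜 A]
    (mul : A →ₗ[𝕜] A →ₗ[𝕜] A)
    (hassoc : ∀ a b c : A, mul (mul a b) c = mul a (mul b c))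
    (e : A) (hel : ∀ a : A, mul e a = a) (her : ∀ a : A, mul a e = a)
    (he : ‖e‖ = 1)
    (f : A) (hf : f ≠ 0) (hff : mul f f = 0) :
    ∃ a b : A, ‖a‖ * ‖b‖ < ‖mul a b‖ := by
  classical
  set c : ℝ := RCLike.re (inner 𝕜 e f : 𝕜) with hc
  set F : ℝ := ‖f‖ ^ 2 with hF
  have hfn : 0 < ‖f‖ := norm_pos_iff.mpr hf
  have hFpos : 0 < F := by rw [hF]; positivity
  set τ : ℝ := if c = 0 then ‖f‖⁻¹ else -2 * c / F with hτ
  set a : A := e + (τ : 𝕜) • f with ha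
  -- multiplication computation
  have hmul : mul a a = e + ((2 * τ : ℝ) : 𝕜) • f := by
    simp only [ha, map_add, map_smul, LinearMap.add_apply, LinearMap.smul_apply,
      hel, her, hff, smul_smul, smul_zero, add_zero]
    push_cast
    rw [two_mul, add_smul]
    abel
  -- norm computations
  have hnorm : ∀ t : ℝ, ‖e + (t : 𝕜) • f‖ ^ 2 = 1 + 2 * t * c + t ^ 2 * F := by
    intro t
    rw [@norm_add_sq 𝕜, he, inner_smul_right, norm_smul]
    simp [RCLike.re_ofReal_mul, mul_pow, hF]
    ring
  have h1 : ‖a‖ ^ 2 = 1 + 2 * τ * c + τ ^ 2 * F := hnorm τ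
  have h2 : ‖mul a a‖ ^ 2 = 1 + 2 * (2 * τ) * c + (2 * τ) ^ 2 * F := by
    rw [hmul]; exact hnorm (2 * τ)
  refine ⟨a, a, ?_⟩
  have key : (‖a‖ * ‖a‖) ^ 2 < ‖mul a a‖ ^ 2 := by
    have : (‖a‖ * ‖a‖) ^ 2 = (1 + 2 * τ * c + τ ^ 2 * F) ^ 2 := by
      rw [← h1]; ring
    rw [this, h2]
    by_cases hc0 : c = 0
    · have hτv : τ = ‖f‖⁻¹ := by rw [hτ, if_pos hc0]
      have hτF : τ ^ 2 * F = 1 := by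
        rw [hτv, hF]
        field_simp
      rw [hc0]
      nlinarith [hτF]
    · have hτv : τ = -2 * c / F := by rw [hτ, if_neg hc0]
      have hFne : F ≠ 0 := hFpos.ne'
      have hc2 : 0 < c ^ 2 := lt_of_le_of_ne (sq_nonneg c) (Ne.symm (pow_ne_zero 2 hc0))
      have hcF : 0 < c ^ 2 / F := div_pos hc2 hFpos
      rw [hτv]
      have h2' : (-2 * c / F) * c = -2 * (c ^ 2 / F) := by field_simp
      have h3' : (-2 * c / F) ^ 2 * F = 4 * (c ^ 2 / F) := by field_simp; ring
      nlinarith [hcF, h2', h3']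
  nlinarith [norm_nonneg a, norm_nonneg (mul a a), key]
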